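/- The forgetful 2-functor GTop^co → Top_≅^co, sending a bounded geometric morphism p : E → S to its codomain S and a commuting-up-to-iso square to its bottom geometric morphism, is a fibration of bicategories: every geometric morphism into the base of a 0-cell has a cartesian lifting (given by pseudopullback of the bounded geometric morphism), and every 2-cell has a cartesian lifting. -/

import Mathlib

open CategoryTheory Bicategory

universe w v u

/-!
We work with an ambient 2-category `T` of elementary toposes (with natural
numbers object), geometric morphisms, and natural transformations, together
with a predicate `Bdd` singling out the bounded geometric morphisms.
`Top_≅` is recovered by restricting 2-cells downstairs to isomorphisms.
-/

/-- 0-cells of `GTop`: bounded geometric morphisms `p : E → S`. -/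
structure GTopObj (T : Type u) [Bicategory.{w, v} T]
    (Bdd : ∀ X Y : T, (X ⟶ Y) → Prop) where
  top : T
  base : T
  p : top ⟶ base
  bounded : Bdd top base p

variable {T : Type u} [Bicategory.{w, v} T] {Bdd : ∀ X Y : T, (X ⟶ Y) → Prop}

/-- 1-cells of `GTop`: squares `(f̄, f̲)` with a specified isomorphism
`f̄ ≫ p₁ ≅ p₀ ≫ f̲`. -/
structure GTopHom (P Q : GTopObj T Bdd) where
  up : P.top ⟶ Q.top
  down : P.base ⟶ Q.base
  sq : up ≫ Q.p ≅ P.p ≫ down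

/-- 2-cells of `GTop`: compatible pairs of natural transformations `(ᾱ, α̲)`,
with the downstairs component `α̲` invertible. -/
@[ext]
structure GTopTwo {P Q : GTopObj T Bdd} (f g : GTopHom P Q) where
  up : f.up ⟶ g.up
  down : f.down ⟶ g.down
  down_isIso : IsIso down
  compat : f.sq.hom ≫ (P.p ◁ down) = (up ▷ Q.p) ≫ g.sq.hom

/-- The hom-categories of `GTop` (vertical composition of 2-cells). -/
instance {P Q : GTopObj T Bdd} : Category (GTopHom P Q) where
  Hom := GTopTwo
  id f := ⟨𝟙 f.up, 𝟙 f.down, inferInstance, by simp⟩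
  comp {f g h} α β :=
    ⟨α.up ≫ β.up, α.down ≫ β.down,
      by haveI := α.down_isIso; haveI := β.down_isIso; infer_instance,
      by
        rw [Bicategory.whiskerLeft_comp, Bicategory.comp_whiskerRight,
          ← Category.assoc, α.compat, Category.assoc, β.compat, ← Category.assoc]⟩
  id_comp α := by apply GTopTwo.ext <;> simp
  comp_id α := by apply GTopTwo.ext <;> simp
  assoc α β γ := by apply GTopTwo.ext <;> simp

/-- Composition of 1-cells of `GTop` (pasting of squares). -/
def GTopHom.comp {P Q R : GTopObj T Bdd} (f : GTopHom P Q) (g : GTopHom Q R) :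
    GTopHom P R where
  up := f.up ≫ g.up
  down := f.down ≫ g.down
  sq := Bicategory.associator _ _ _ ≪≫ Bicategory.whiskerLeftIso f.up g.sq ≪≫
    (Bicategory.associator _ _ _).symm ≪≫ Bicategory.whiskerRightIso f.sq g.down ≪≫
    Bicategory.associator _ _ _

/-- Cartesianness of a 1-cell of `GTop` for the forgetful 2-functor
`GTop^co → Top_≅^co`, in the sense of Buckley's fibrations of bicategories:
the comparison functor from each hom-category `GTop(r, p₀)` to the
pseudopullback of `GTop(r, p₁) → Top_≅(r.base, p₁.base) ← Top_≅(r.base, p₀.base)`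
is essentially surjective and fully faithful. -/
def IsCartesianGTop {P Q : GTopObj T Bdd} (f : GTopHom P Q) : Prop :=
  (∀ (Z : GTopObj T Bdd) (g : GTopHom Z Q) (h : Z.base ⟶ P.base)
      (θ : h ≫ f.down ≅ g.down),
    ∃ (k : GTopHom Z P) (βg : k.comp f ≅ g) (βh : k.down ≅ h),
      GTopTwo.down βg.hom = (βh.hom ▷ f.down) ≫ θ.hom) ∧
  (∀ (Z : GTopObj T Bdd) (k k' : GTopHom Z P) (u : k.comp f ⟶ k'.comp f)
      (d : k.down ⟶ k'.down), IsIso d →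
    GTopTwo.down u = d ▷ f.down →
    ∃! e : k ⟶ k', GTopTwo.down e = d ∧ GTopTwo.up e ▷ f.up = GTopTwo.up u)

/-- A square `w : p ≫ f ≅ q ≫ g` exhibits `P` as a pseudopullback (bilimit) of
`f` and `g`: elementwise statement of the universal property. -/
def IsPseudoPullback {P X Y Z : T} (p : P ⟶ X) (f : X ⟶ Z) (q : P ⟶ Y) (g : Y ⟶ Z)
    (w : p ≫ f ≅ q ≫ g) : Prop :=
  (∀ (W : T) (a : W ⟶ X) (b : W ⟶ Y) (θ : a ≫ f ≅ b ≫ g),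
    ∃ (c : W ⟶ P) (i : c ≫ p ≅ a) (j : c ≫ q ≅ b),
      (i.hom ▷ f) ≫ θ.hom =
        (Bicategory.associator c p f).hom ≫ (c ◁ w.hom) ≫
          (Bicategory.associator c q g).inv ≫ (j.hom ▷ g)) ∧
  (∀ (W : T) (c c' : W ⟶ P) (u : c ≫ p ⟶ c' ≫ p) (v : c ≫ q ⟶ c' ≫ q),
    (Bicategory.associator c p f).hom ≫ (c ◁ w.hom) ≫
        (Bicategory.associator c q g).inv ≫ (v ▷ g) =
      (u ▷ f) ≫ (Bicategory.associator c' p f).hom ≫ (c' ◁ w.hom) ≫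
        (Bicategory.associator c' q g).inv →
    ∃! e : c ⟶ c', (e ▷ p) = u ∧ (e ▷ q) = v)

/-- Cartesianness of a 2-cell `α : f → g` for the fibration
`GTop^co → Top_≅^co` (cocartesianness in `GTop`). -/
def IsCartesianTwoGTop {P Q : GTopObj T Bdd} {f g : GTopHom P Q} (α : f ⟶ g) : Prop :=
  ∀ (h : GTopHom P Q) (β : f ⟶ h) (δ : g.down ⟶ h.down), IsIso δ →
    GTopTwo.down α ≫ δ = GTopTwo.down β →
    ∃! γ : g ⟶ h, GTopTwo.down γ = δ ∧ α ≫ γ = β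

section Helpers

variable {P Q : GTopObj T Bdd}

@[simp] lemma GTopTwo.id_up (f : GTopHom P Q) : GTopTwo.up (𝟙 f) = 𝟙 f.up := rfl
@[simp] lemma GTopTwo.id_down (f : GTopHom P Q) : GTopTwo.down (𝟙 f) = 𝟙 f.down := rfl
@[simp] lemma GTopTwo.comp_up {f g h : GTopHom P Q} (α : f ⟶ g) (β : g ⟶ h) :
    GTopTwo.up (α ≫ β) = GTopTwo.up α ≫ GTopTwo.up β := rfl
@[simp] lemma GTopTwo.comp_down {f g h : GTopHom P Q} (α : f ⟶ g) (β : g ⟶ h) :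
    GTopTwo.down (α ≫ β) = GTopTwo.down α ≫ GTopTwo.down β := rfl

lemma GTopTwo.hom_ext {f g : GTopHom P Q} {α β : f ⟶ g}
    (hu : GTopTwo.up α = GTopTwo.up β) (hd : GTopTwo.down α = GTopTwo.down β) :
    α = β :=
  GTopTwo.ext hu hd

/-- Build an isomorphism in a hom-category of `GTop` from isomorphisms of the
two components and the compatibility condition. -/
def GTopTwo.mkIso {f g : GTopHom P Q} (u : f.up ≅ g.up) (d : f.down ≅ g.down)
    (compat : f.sq.hom ≫ (P.p ◁ d.hom) = (u.hom ▷ Q.p) ≫ g.sq.hom) : f ≅ g where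
  hom := ⟨u.hom, d.hom, inferInstance, compat⟩
  inv := ⟨u.inv, d.inv, inferInstance, by
    rw [← cancel_epi (u.hom ▷ Q.p), ← Category.assoc, ← Category.assoc,
      ← Bicategory.comp_whiskerRight, u.hom_inv_id, Bicategory.id_whiskerRight,
      Category.id_comp, ← compat, Category.assoc, ← Bicategory.whiskerLeft_comp,
      d.hom_inv_id, Bicategory.whiskerLeft_id, Category.comp_id]⟩
  hom_inv_id := by apply GTopTwo.hom_ext <;> simp
  inv_hom_id := by apply GTopTwo.hom_ext <;> simp

@[simp] lemma GTopTwo.mkIso_hom_up {f g : GTopHom P Q} (u : f.up ≅ g.up)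
    (d : f.down ≅ g.down) (compat) :
    GTopTwo.up (GTopTwo.mkIso u d compat).hom = u.hom := rfl
@[simp] lemma GTopTwo.mkIso_hom_down {f g : GTopHom P Q} (u : f.up ≅ g.up)
    (d : f.down ≅ g.down) (compat) :
    GTopTwo.down (GTopTwo.mkIso u d compat).hom = d.hom := rfl

@[simp] lemma GTopHom.comp_up' {R : GTopObj T Bdd} (f : GTopHom P Q) (g : GTopHom Q R) :
    (f.comp g).up = f.up ≫ g.up := rfl
@[simp] lemma GTopHom.comp_down' {R : GTopObj T Bdd} (f : GTopHom P Q) (g : GTopHom Q R) :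
    (f.comp g).down = f.down ≫ g.down := rfl

lemma GTopHom.comp_sq_hom {R : GTopObj T Bdd} (f : GTopHom P Q) (g : GTopHom Q R) :
    (f.comp g).sq.hom =
      (Bicategory.associator f.up g.up R.p).hom ≫ (f.up ◁ g.sq.hom) ≫
        (Bicategory.associator f.up Q.p g.down).inv ≫ (f.sq.hom ▷ g.down) ≫
        (Bicategory.associator P.p f.down g.down).hom := by
  simp [GTopHom.comp]

end Helpers

/-- given that pseudopullbacks of bounded geometric morphisms
along arbitrary geometric morphisms exist (with bounded left leg), the
forgetful 2-functor `GTop^co → Top_≅^co` is a fibration of bicategories in the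
sense of Buckley: every geometric morphism into the base of a 0-cell has a
cartesian lifting (given by pseudopullback), and every (invertible) downstairs
2-cell has a cartesian lifting. -/

theorem gtop_is_fibration_of_bicategories
    (hpb : ∀ (Q : GTopObj T Bdd) (S₀ : T) (f : S₀ ⟶ Q.base),
      ∃ (E₀ : T) (p : E₀ ⟶ S₀) (hb : Bdd E₀ S₀ p) (fup : E₀ ⟶ Q.top)
        (sq : fup ≫ Q.p ≅ p ≫ f), IsPseudoPullback fup Q.p p f sq) :
    (∀ (Q : GTopObj T Bdd) (S₀ : T) (f : S₀ ⟶ Q.base),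
      ∃ (E₀ : T) (p : E₀ ⟶ S₀) (hb : Bdd E₀ S₀ p)
        (F : GTopHom (⟨E₀, S₀, p, hb⟩ : GTopObj T Bdd) Q),
        F.down = f ∧ IsCartesianGTop F) ∧
    (∀ (P Q : GTopObj T Bdd) (F : GTopHom P Q) (f' : P.base ⟶ Q.base)
        (δ : F.down ⟶ f'), IsIso δ →
      ∃ (F' : GTopHom P Q) (hd : F'.down = f') (α : F ⟶ F'),
        GTopTwo.down α ≫ eqToHom hd = δ ∧ IsCartesianTwoGTop α) := by
  constructor
  · -- cartesian liftings of 1-cells, via pseudopullback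
    intro Q S₀ f
    obtain ⟨E₀, p, hb, fup, sq, hess, hff⟩ := hpb Q S₀ f
    refine ⟨E₀, p, hb, ⟨fup, f, sq⟩, rfl, ?_, ?_⟩
    · -- essential surjectivity part
      intro Z g h θ
      obtain ⟨c, i, j, hcij⟩ := hess Z.top g.up (Z.p ≫ h)
        (g.sq ≪≫ Bicategory.whiskerLeftIso Z.p θ.symm ≪≫
          (Bicategory.associator Z.p h f).symm)
      have hc : (GTopHom.comp ⟨c, h, j⟩ ⟨fup, f, sq⟩).sq.hom ≫ (Z.p ◁ θ.hom) =
          (i.hom ▷ Q.p) ≫ g.sq.hom := by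
        simp only [Iso.trans_hom, Iso.symm_hom, Bicategory.whiskerLeftIso_hom] at hcij
        rw [GTopHom.comp_sq_hom]
        simp only [Category.assoc] at hcij ⊢
        rw [← reassoc_of% hcij]
        simp
      exact ⟨⟨c, h, j⟩, GTopTwo.mkIso i θ hc, Iso.refl h, by simp; rfl⟩
    · -- full faithfulness part
      intro Z k k' u d hd hud
      haveI := hd
      have key : (Bicategory.associator k.up fup Q.p).hom ≫ (k.up ◁ sq.hom) ≫
          (Bicategory.associator k.up p f).inv ≫
          ((k.sq.hom ≫ (Z.p ◁ d) ≫ k'.sq.inv) ▷ f) =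
          (GTopTwo.up u ▷ Q.p) ≫ (Bicategory.associator k'.up fup Q.p).hom ≫
            (k'.up ◁ sq.hom) ≫ (Bicategory.associator k'.up p f).inv := by
        have hc := u.compat
        rw [GTopHom.comp_sq_hom, GTopHom.comp_sq_hom, hud] at hc
        simp only [Category.assoc] at hc
        refine (cancel_mono (k'.sq.hom ▷ f)).1 ?_
        simp only [Bicategory.comp_whiskerRight, Category.assoc,
          Bicategory.inv_hom_whiskerRight, Category.comp_id,
          Bicategory.inv_hom_whiskerRight_assoc]
        refine (cancel_mono (Bicategory.associator Z.p k'.down f).hom).1 ?_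
        simp only [Category.assoc]
        rw [Bicategory.associator_naturality_middle]
        dsimp only [GTopHom.comp_up'] at hc ⊢
        refine Eq.trans ?_ (hc.trans ?_)
        · cat_disch
        · simp only [Category.assoc]; rfl
      obtain ⟨e₀, ⟨he₁, he₂⟩, heu⟩ := hff Z.top k.up k'.up (GTopTwo.up u)
        (k.sq.hom ≫ (Z.p ◁ d) ≫ k'.sq.inv) key
      refine ⟨⟨e₀, d, hd, by rw [he₂]; simp⟩, ⟨rfl, he₁⟩, ?_⟩
      rintro e' ⟨hd', hu'⟩
      apply GTopTwo.hom_ext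
      · exact heu e'.up ⟨hu', by
          have := e'.compat
          rw [hd'] at this
          rw [← cancel_mono k'.sq.hom, Category.assoc, Category.assoc,
            Iso.inv_hom_id, Category.comp_id]
          exact this.symm⟩
      · exact hd'
  · -- cartesian liftings of 2-cells
    intro P Q F f' δ hδ
    haveI := hδ
    refine ⟨⟨F.up, f', F.sq ≪≫ Bicategory.whiskerLeftIso P.p (asIso δ)⟩, rfl,
      ⟨𝟙 F.up, δ, hδ, by simp⟩, by simp, ?_⟩
    intro h β δ' hδ' hcomp
    haveI := hδ'
    simp only [eqToHom_refl, Category.comp_id] at hcomp ⊢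
    refine ⟨⟨β.up, δ', hδ', ?_⟩, ⟨rfl, ?_⟩, ?_⟩
    · have := β.compat
      rw [← hcomp] at this
      simpa using this
    · apply GTopTwo.hom_ext
      · simp
      · simpa using hcomp
    · rintro γ ⟨hγd, hγc⟩
      apply GTopTwo.hom_ext
      · have := congrArg GTopTwo.up hγc
        simpa using this
      · exact hγd
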